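/- arXiv:1506.07949 — 2 statements merged into one kernel-verified Lean document; each statement's English description precedes it below -/
import Mathlib

section
/- The digraph H3 is a strong balanced bipartite digraph on 2a = 6 vertices that satisfies the following condition: for every dominating pair of vertices {x, y}, either d(x) ≥ 2a−2 and d(y) ≥ a+1, or d(y) ≥ 2a−2 and d(x) ≥ a+1; nevertheless, H3 contains no hamiltonian cycle. -/
/-- The degree of a vertex `x` in the digraph with arc relation `A`:
number of out-neighbours plus number of in-neighbours. -/
noncomputable def deg {V : Type*} (A : V → V → Prop) (x : V) : ℕ :=
  Nat.card {y : V // A x y} + Nat.card {y : V // A y x}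

/-- A digraph is strong if for every ordered pair of vertices there is a directed path. -/
def IsStrong {V : Type*} (A : V → V → Prop) : Prop :=
  ∀ x y : V, Relation.ReflTransGen A x y

/-- `{x, y}` is a dominating pair: `x ≠ y` and some vertex `z` is dominated by both. -/
def DominatingPair {V : Type*} (A : V → V → Prop) (x y : V) : Prop :=
  x ≠ y ∧ ∃ z, A x z ∧ A y z

/-- `{x, y}` is a dominated pair: `x ≠ y` and some vertex `z` dominates both. -/
def DominatedPair {V : Type*} (A : V → V → Prop) (x y : V) : Prop :=
  x ≠ y ∧ ∃ z, A z x ∧ A z y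

/-- `V1`, `V2` form a bipartition of the digraph `A`: every vertex lies in exactly
one of them and both are independent sets. -/
def IsBipartition {V : Type*} (A : V → V → Prop) (V1 V2 : Finset V) : Prop :=
  (∀ v : V, v ∈ V1 ∨ v ∈ V2) ∧ Disjoint V1 V2 ∧
  (∀ x ∈ V1, ∀ y ∈ V1, ¬ A x y) ∧ (∀ x ∈ V2, ∀ y ∈ V2, ¬ A x y)

/-- A digraph is hamiltonian iff there is a permutation `σ` of the vertices with an arc
from each vertex to its successor, and all vertices lie on one cycle of `σ`. -/
def IsHamiltonian {V : Type*} (A : V → V → Prop) : Prop :=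
  ∃ σ : Equiv.Perm V, (∀ v, A v (σ v)) ∧ ∀ v w : V, σ.SameCycle v w

/-- A digraph has a cycle factor iff there is a permutation `σ` of the vertices with an arc
from each vertex to its successor (the cycles of `σ` are then vertex-disjoint directed
cycles covering all vertices; there are no loops in a bipartite digraph, so no fixed points). -/
def HasCycleFactor {V : Type*} (A : V → V → Prop) : Prop :=
  ∃ σ : Equiv.Perm V, ∀ v, A v (σ v)

/-- A perfect matching from `S` to `T`: a choice, for each vertex of `S`, of an arc
to a vertex of `T`, no two arcs sharing a head. -/
def IsPerfectMatchingFromTo {V : Type*} (A : V → V → Prop) (S T : Finset V) : Prop :=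
  ∃ f : V → V, Set.InjOn f ↑S ∧ ∀ x ∈ S, f x ∈ T ∧ A x (f x)

/-- Isomorphism of digraphs. -/
def DigraphIso {V W : Type*} (A : V → V → Prop) (B : W → W → Prop) : Prop :=
  ∃ e : V ≃ W, ∀ x y : V, A x y ↔ B (e x) (e y)

/-- The digraph `H1`, with `x1 = 0`, `x2 = 1`, `y1 = 2`, `y2 = 3`.
Arcs: `x1 ↔ y1`, `x2 ↔ y1`, `x2 ↔ y2`. -/
def H1Adj : Fin 4 → Fin 4 → Prop := fun i j =>
  (i, j) ∈ ([(0, 2), (2, 0), (1, 2), (2, 1), (1, 3), (3, 1)] : List (Fin 4 × Fin 4))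

/-- The digraph `H2` (two variants, indexed by `b : Bool`), with `x1 = 0`, `x2 = 1`,
`x3 = 2`, `y1 = 3`, `y2 = 4`, `y3 = 5`. Arcs: the 2-cycles `x1 ↔ y1`, `x2 ↔ y1`,
`x3 ↔ y2`, `x3 ↔ y3`, the arcs `y2 → x1`, `y2 → x2`, `y3 → x1`, `y3 → x2`, `y1 → x3`,
and (iff `b = true`) the arc `x3 → y1`. -/
def H2Adj (b : Bool) : Fin 6 → Fin 6 → Prop := fun i j =>
  (i, j) ∈ ([(0, 3), (3, 0), (1, 3), (3, 1), (2, 4), (4, 2), (2, 5), (5, 2),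
             (4, 0), (4, 1), (5, 0), (5, 1), (3, 2)] : List (Fin 6 × Fin 6)) ∨
  (b = true ∧ (i, j) = (2, 3))

/-- The digraph `H3`, with `x1 = 0`, `x2 = 1`, `x3 = 2`, `y1 = 3`, `y2 = 4`, `y3 = 5`.
Arcs: the directed 4-cycle `x1 → y1 → x2 → y2 → x1`, and the 2-cycles
`x3 ↔ y1`, `x3 ↔ y2`, `y3 ↔ x1`, `y3 ↔ x2`. -/
def H3Adj : Fin 6 → Fin 6 → Prop := fun i j =>
  (i, j) ∈ ([(0, 3), (3, 1), (1, 4), (4, 0),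
             (2, 3), (3, 2), (2, 4), (4, 2),
             (5, 0), (0, 5), (5, 1), (1, 5)] : List (Fin 6 × Fin 6))


instance : DecidableRel H3Adj := fun i j => by unfold H3Adj; infer_instance

private lemma twoCycle (σ : Equiv.Perm (Fin 6)) {v w u : Fin 6} (hv : σ v = w) (hw : σ w = v)
    (hsc : σ.SameCycle v u) : u = v ∨ u = w := by
  obtain ⟨i, -, hi⟩ := hsc.exists_pow_eq'
  have key : ∀ n : ℕ, (σ ^ n) v = v ∨ (σ ^ n) v = w := by
    intro n
    induction n with
    | zero => left; rfl
    | succ m ih =>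
      rw [pow_succ', Equiv.Perm.mul_apply]
      rcases ih with h | h <;> rw [h] <;> simp [hv, hw]
  rcases key i with h | h <;> [left; right] <;> rw [← hi, h]

private lemma deg_eq (x : Fin 6) :
    deg H3Adj x = (Finset.univ.filter (fun y => H3Adj x y)).card
      + (Finset.univ.filter (fun y => H3Adj y x)).card := by
  simp [deg, Nat.card_eq_fintype_card, Fintype.card_subtype]

private lemma deg_four (x : Fin 6) : deg H3Adj x = 4 := by
  rw [deg_eq]; fin_cases x <;> decide

/-- `H3` is a strong balanced bipartite digraph on `2a = 6` vertices
satisfying the degree condition (`d(x) ≥ 2a−2, d(y) ≥ a+1` or symmetrically) for every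
dominating pair, yet it has no hamiltonian cycle. -/
theorem stmt_9 :
    IsStrong H3Adj ∧
    IsBipartition H3Adj ({0, 1, 2} : Finset (Fin 6)) ({3, 4, 5} : Finset (Fin 6)) ∧
    ({0, 1, 2} : Finset (Fin 6)).card = 3 ∧ ({3, 4, 5} : Finset (Fin 6)).card = 3 ∧
    (∀ x y : Fin 6, DominatingPair H3Adj x y →
      (2 * 3 - 2 ≤ deg H3Adj x ∧ 3 + 1 ≤ deg H3Adj y) ∨
      (2 * 3 - 2 ≤ deg H3Adj y ∧ 3 + 1 ≤ deg H3Adj x)) ∧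
    ¬ IsHamiltonian H3Adj := by
  refine ⟨?_, ⟨by decide, by decide, by decide, by decide⟩, by decide, by decide, ?_, ?_⟩
  · -- strong
    have from0 : ∀ y : Fin 6, Relation.ReflTransGen H3Adj 0 y := by
      intro y
      fin_cases y
      · exact .refl
      · exact .head (show H3Adj 0 3 from by decide) (.head (show H3Adj 3 1 from by decide) (.refl))
      · exact .head (show H3Adj 0 3 from by decide) (.head (show H3Adj 3 2 from by decide) (.refl))
      · exact .head (show H3Adj 0 3 from by decide) (.refl)
      · exact .head (show H3Adj 0 3 from by decide) (.head (show H3Adj 3 1 from by decide) (.head (show H3Adj 1 4 from by decide) (.refl)))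
      · exact .head (show H3Adj 0 5 from by decide) (.refl)
    have to0 : ∀ x : Fin 6, Relation.ReflTransGen H3Adj x 0 := by
      intro x
      fin_cases x
      · exact .refl
      · exact .head (show H3Adj 1 4 from by decide) (.head (show H3Adj 4 0 from by decide) (.refl))
      · exact .head (show H3Adj 2 4 from by decide) (.head (show H3Adj 4 0 from by decide) (.refl))
      · exact .head (show H3Adj 3 1 from by decide) (.head (show H3Adj 1 4 from by decide) (.head (show H3Adj 4 0 from by decide) (.refl)))
      · exact .head (show H3Adj 4 0 from by decide) (.refl)
      · exact .head (show H3Adj 5 0 from by decide) (.refl)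
    exact fun x y => (to0 x).trans (from0 y)
  · -- degree condition
    intro x y _
    left
    rw [deg_four, deg_four]
    omega
  · -- not hamiltonian
    rintro ⟨σ, ha, hc⟩
    have h0 := (show ∀ t, H3Adj 0 t → t = 3 ∨ t = 5 by decide) _ (ha 0)
    have h1 := (show ∀ t, H3Adj 1 t → t = 4 ∨ t = 5 by decide) _ (ha 1)
    have h2 := (show ∀ t, H3Adj 2 t → t = 3 ∨ t = 4 by decide) _ (ha 2)
    have h3 := (show ∀ t, H3Adj 3 t → t = 1 ∨ t = 2 by decide) _ (ha 3)
    have h4 := (show ∀ t, H3Adj 4 t → t = 0 ∨ t = 2 by decide) _ (ha 4)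
    have h5 := (show ∀ t, H3Adj 5 t → t = 0 ∨ t = 1 by decide) _ (ha 5)
    rcases h0 with h0 | h0
    · rcases h2 with h2 | h2
      · exact absurd (σ.injective (h2.trans h0.symm)) (by decide)
      rcases h1 with h1 | h1
      · exact absurd (σ.injective (h1.trans h2.symm)) (by decide)
      rcases h3 with h3 | h3
      · rcases h5 with h5 | h5
        · rcases h4 with h4 | h4
          · exact absurd (σ.injective (h4.trans h5.symm)) (by decide)
          rcases twoCycle σ h2 h4 (hc 2 0) with h | h <;> exact absurd h (by decide)
        · exact absurd (σ.injective (h5.trans h3.symm)) (by decide)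
      · rcases h4 with h4 | h4
        · rcases h5 with h5 | h5
          · exact absurd (σ.injective (h5.trans h4.symm)) (by decide)
          rcases twoCycle σ h1 h5 (hc 1 0) with h | h <;> exact absurd h (by decide)
        · exact absurd (σ.injective (h4.trans h3.symm)) (by decide)
    · rcases h1 with h1 | h1
      swap
      · exact absurd (σ.injective (h1.trans h0.symm)) (by decide)
      rcases h2 with h2 | h2
      swap
      · exact absurd (σ.injective (h2.trans h1.symm)) (by decide)
      rcases h5 with h5 | h5
      · rcases twoCycle σ h0 h5 (hc 0 1) with h | h <;> exact absurd h (by decide)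
      · rcases h3 with h3 | h3
        · exact absurd (σ.injective (h3.trans h5.symm)) (by decide)
        rcases twoCycle σ h2 h3 (hc 2 0) with h | h <;> exact absurd h (by decide)
end

section
/- The digraph H1 is a strong balanced bipartite digraph on 2a = 4 vertices such that d(x) + d(y) ≥ 3a holds for every dominating pair of vertices {x, y} and for every dominated pair of vertices {x, y}; nevertheless, H1 contains no hamiltonian cycle. (Hence the degree-sum condition d(x)+d(y) ≥ 3a on dominating and dominated pairs does not imply hamiltonicity of a strong balanced bipartite digraph.) -/
instance : DecidableRel H1Adj := fun i j => by unfold H1Adj; infer_instance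

/-- `H1` is a strong balanced bipartite digraph on `2a = 4` vertices with
`d(x) + d(y) ≥ 3a` for every dominating pair and every dominated pair `{x, y}`, yet it
has no hamiltonian cycle. -/
theorem stmt_10 :
    IsStrong H1Adj ∧
    IsBipartition H1Adj ({0, 1} : Finset (Fin 4)) ({2, 3} : Finset (Fin 4)) ∧
    ({0, 1} : Finset (Fin 4)).card = 2 ∧ ({2, 3} : Finset (Fin 4)).card = 2 ∧
    (∀ x y : Fin 4, DominatingPair H1Adj x y →
      3 * 2 ≤ deg H1Adj x + deg H1Adj y) ∧
    (∀ x y : Fin 4, DominatedPair H1Adj x y →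
      3 * 2 ≤ deg H1Adj x + deg H1Adj y) ∧
    ¬ IsHamiltonian H1Adj := by
  have hdeg : ∀ x : Fin 4,
      deg H1Adj x = Fintype.card {y // H1Adj x y} + Fintype.card {y // H1Adj y x} := by
    intro x; simp [deg, Nat.card_eq_fintype_card]
  have h02 : Relation.ReflTransGen H1Adj 0 2 := .single (by decide)
  have h20 : Relation.ReflTransGen H1Adj 2 0 := .single (by decide)
  have h12 : Relation.ReflTransGen H1Adj 1 2 := .single (by decide)
  have h21 : Relation.ReflTransGen H1Adj 2 1 := .single (by decide)
  have h13 : Relation.ReflTransGen H1Adj 1 3 := .single (by decide)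
  have h31 : Relation.ReflTransGen H1Adj 3 1 := .single (by decide)
  refine ⟨?_, ?_, by decide, by decide, ?_, ?_, ?_⟩
  · intro x y
    fin_cases x <;> fin_cases y <;>
      first
        | exact .refl
        | exact h02 | exact h20 | exact h12 | exact h21 | exact h13 | exact h31
        | exact h02.trans h21
        | exact (h02.trans h21).trans h13
        | exact h12.trans h20
        | exact h21.trans h13
        | exact (h31.trans h12).trans h20
        | exact h31.trans h12
  · refine ⟨by decide, by decide, by decide, by decide⟩
  · intro x y h
    rw [hdeg x, hdeg y]
    revert h
    revert x y
    unfold DominatingPair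
    decide
  · intro x y h
    rw [hdeg x, hdeg y]
    revert h
    revert x y
    unfold DominatedPair
    decide
  · unfold IsHamiltonian
    decide
end
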